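/- Let θ₁,...,θ_r : (0,∞) → ℂ be continuous, tending to zero exponentially fast as t → ∞, and satisfying θᵢ(1/t) = εᵢ t^{wᵢ} θᵢ(t) with εᵢ ∈ {±1}. Define Λ(θ₁,...,θ_r; s₁,...,s_r) as the iterated integral ∫_{0≤t₁≤...≤t_r≤∞} ∏ᵢ θᵢ(tᵢ)tᵢ^{sᵢ−1}dtᵢ. Then Λ(θ₁,...,θ_r; s₁,...,s_r) = ε₁···ε_r · Λ(θ_r,...,θ₁; w_r−s_r,...,w₁−s₁). -/

import Mathlib

open Complex Real MeasureTheory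

/-- Iterated integral `∫_{0 ≤ t₁ ≤ ⋯ ≤ t_k ≤ T} ∏ θᵢ(tᵢ) tᵢ^{sᵢ-1} dtᵢ`, where the
list is given in *reverse* order: the head of the list is the outermost (largest)
variable. -/
noncomputable def iterMellinUpTo : List ((ℝ → ℂ) × ℂ) → ℝ → ℂ
  | [], _ => 1
  | (θ, s) :: rest, T =>
      ∫ t in Set.Ioc (0 : ℝ) T, θ t * (t : ℂ) ^ (s - 1) * iterMellinUpTo rest t

/-- The full iterated Mellin transform `Λ`: the simplex integral over
`0 ≤ t₁ ≤ ⋯ ≤ t_k < ∞`, the list being in reverse order (head = outermost). -/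
noncomputable def iterMellin : List ((ℝ → ℂ) × ℂ) → ℂ
  | [] => 1
  | (θ, s) :: rest =>
      ∫ t in Set.Ioi (0 : ℝ), θ t * (t : ℂ) ^ (s - 1) * iterMellinUpTo rest t

namespace IterMellinFE

structure GP where
  θ : ℝ → ℂ
  s : ℂ
  ε : ℂ
  w : ℤ
  hc : ContinuousOn θ (Set.Ioi 0)
  hε : ε = 1 ∨ ε = -1
  hinv : ∀ t : ℝ, 0 < t → θ (1 / t) = ε * (t : ℂ) ^ (w : ℂ) * θ t
  hdecay : ∃ C a : ℝ, 0 < C ∧ 0 < a ∧ ∀ t : ℝ, 1 ≤ t → ‖θ t‖ ≤ C * Real.exp (-a * t)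

noncomputable def GP.F (p : GP) : ℝ → ℂ :=
  (Set.Ioi (0:ℝ)).indicator fun t => p.θ t * (t : ℂ) ^ (p.s - 1)

noncomputable def GP.dual (p : GP) : GP := { p with s := (p.w : ℂ) - p.s }

lemma GP.F_of_pos (p : GP) {t : ℝ} (ht : 0 < t) :
    p.F t = p.θ t * (t : ℂ) ^ (p.s - 1) := Set.indicator_of_mem ht _

lemma GP.norm_ε (p : GP) : ‖p.ε‖ = 1 := by
  rcases p.hε with h | h <;> simp [h]

lemma GP.stronglyMeasurable_F (p : GP) : StronglyMeasurable p.F := by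
  have h1 : ContinuousOn (fun t : ℝ => p.θ t * (t : ℂ) ^ (p.s - 1)) (Set.Ioi 0) := by
    refine p.hc.mul (fun t ht => ?_)
    exact (Complex.continuousAt_ofReal_cpow_const t _ (Or.inr (ne_of_gt ht))).continuousWithinAt
  have : Measurable p.F := by
    rw [GP.F, ← Set.piecewise_eq_indicator]
    exact h1.measurable_piecewise continuousOn_const measurableSet_Ioi
  exact this.stronglyMeasurable

end IterMellinFE
namespace IterMellinFE

lemma GP.continuousOn_raw (p : GP) :
    ContinuousOn (fun t : ℝ => p.θ t * (t : ℂ) ^ (p.s - 1)) (Set.Ioi 0) :=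
  p.hc.mul (fun t ht =>
    (Complex.continuousAt_ofReal_cpow_const t _ (Or.inr (ne_of_gt ht))).continuousWithinAt)

lemma GP.exists_bound_small (p : GP) : ∃ K : ℝ, ∀ t ∈ Set.Ioc (0:ℝ) 1, ‖p.F t‖ ≤ K := by
  obtain ⟨C, a, hC, ha, hb⟩ := p.hdecay
  set b := (p.s - 1).re with hbdef
  set m : ℕ := ⌈|b| + |(p.w : ℝ)|⌉₊ with hm
  refine ⟨C * m.factorial / a ^ m, fun t ht => ?_⟩
  obtain ⟨ht0, ht1⟩ := ht
  have hti : 0 < t⁻¹ := inv_pos.2 ht0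
  have h1i : (1:ℝ) ≤ t⁻¹ := (one_le_inv_iff₀).2 ⟨ht0, ht1⟩
  have hFt : ‖p.F t‖ = ‖p.θ t‖ * t ^ b := by
    rw [p.F_of_pos ht0, norm_mul,
      Complex.norm_cpow_eq_rpow_re_of_pos ht0]
  have hcw : ‖((t⁻¹ : ℝ) : ℂ) ^ ((p.w : ℤ) : ℂ)‖ = t⁻¹ ^ ((p.w : ℝ)) := by
    rw [Complex.norm_cpow_eq_rpow_re_of_pos hti]
    norm_num
  have hθ : ‖p.θ t‖ ≤ t⁻¹ ^ ((p.w : ℝ)) * (C * Real.exp (-a * t⁻¹)) := by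
    have e := p.hinv t⁻¹ hti
    rw [one_div, inv_inv] at e
    rw [e, norm_mul, norm_mul, p.norm_ε, one_mul, hcw]
    exact mul_le_mul_of_nonneg_left (hb t⁻¹ h1i) (Real.rpow_nonneg hti.le _)
  have hx : 0 < a * t⁻¹ := mul_pos ha hti
  have hexp : Real.exp (-a * t⁻¹) ≤ m.factorial / (a * t⁻¹) ^ m := by
    have h2 : (a * t⁻¹) ^ m / m.factorial ≤ Real.exp (a * t⁻¹) :=
      le_trans (Finset.single_le_sum (f := fun i => (a * t⁻¹) ^ i / i.factorial)
        (fun i _ => by positivity) (Finset.self_mem_range_succ m))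
        (Real.sum_le_exp_of_nonneg hx.le _)
    have h3 : (0:ℝ) < (a * t⁻¹) ^ m / m.factorial := by positivity
    calc Real.exp (-a * t⁻¹) = (Real.exp (a * t⁻¹))⁻¹ := by rw [neg_mul, Real.exp_neg]
      _ ≤ ((a * t⁻¹) ^ m / m.factorial)⁻¹ := inv_anti₀ h3 h2
      _ = m.factorial / (a * t⁻¹) ^ m := by rw [inv_div]
  have key : t ^ (m:ℕ) * (t⁻¹ ^ ((p.w : ℝ)) * t ^ b) ≤ 1 := by
    have e1 : t ^ (m:ℕ) = t ^ ((m:ℕ):ℝ) := (Real.rpow_natCast t m).symm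
    have e2 : t⁻¹ ^ ((p.w : ℝ)) = t ^ (-(p.w : ℝ)) := by
      rw [Real.inv_rpow ht0.le, ← Real.rpow_neg ht0.le]
    rw [e1, e2, ← Real.rpow_add ht0, ← Real.rpow_add ht0]
    apply Real.rpow_le_one ht0.le ht1
    have hceil : |b| + |(p.w : ℝ)| ≤ (m : ℝ) := Nat.le_ceil _
    have h4 : -(p.w : ℝ) ≥ -|(p.w : ℝ)| := neg_le_neg (le_abs_self _)
    have h5 : b ≥ -|b| := neg_abs_le b
    linarith
  have hrw : (a * t⁻¹) ^ m = a ^ m * (t ^ m)⁻¹ := by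
    rw [mul_pow, inv_pow]
  calc ‖p.F t‖ = ‖p.θ t‖ * t ^ b := hFt
    _ ≤ (t⁻¹ ^ ((p.w : ℝ)) * (C * (m.factorial / (a * t⁻¹) ^ m))) * t ^ b := by
        apply mul_le_mul_of_nonneg_right _ (Real.rpow_nonneg ht0.le b)
        refine le_trans hθ ?_
        have := mul_le_mul_of_nonneg_left hexp hC.le
        exact mul_le_mul_of_nonneg_left this (Real.rpow_nonneg hti.le _)
    _ = (C * m.factorial / a ^ m) * (t ^ (m:ℕ) * (t⁻¹ ^ ((p.w : ℝ)) * t ^ b)) := by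
        rw [hrw]
        have htm : (t:ℝ) ^ m ≠ 0 := pow_ne_zero _ ht0.ne'
        have ham : (a:ℝ) ^ m ≠ 0 := pow_ne_zero _ ha.ne'
        field_simp
    _ ≤ (C * m.factorial / a ^ m) * 1 := by
        apply mul_le_mul_of_nonneg_left key (by positivity)
    _ = C * m.factorial / a ^ m := mul_one _

end IterMellinFE
namespace IterMellinFE

lemma GP.integrableOn_F_Ioi1 (p : GP) : IntegrableOn p.F (Set.Ioi 1) := by
  obtain ⟨C, a, hC, ha, hb⟩ := p.hdecay
  set b := (p.s - 1).re with hbdef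
  have hint : IntegrableOn (fun t : ℝ => C * (t ^ (max b 0) * Real.exp (-a * t)))
      (Set.Ioi 1) := by
    have h0 : IntegrableOn (fun t : ℝ => t ^ (max b 0) * Real.exp (-a * t ^ (1:ℝ)))
        (Set.Ioi 0) :=
      integrableOn_rpow_mul_exp_neg_mul_rpow
        (lt_of_lt_of_le (by norm_num) (le_max_right b 0)) one_pos ha
    have h1 : IntegrableOn (fun t : ℝ => t ^ (max b 0) * Real.exp (-a * t))
        (Set.Ioi 0) := by
      refine h0.congr_fun (fun t ht => ?_) measurableSet_Ioi
      simp only [Real.rpow_one]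
    exact ((h1.mono_set (Set.Ioi_subset_Ioi zero_le_one))).const_mul C
  refine Integrable.mono hint (p.stronglyMeasurable_F.aestronglyMeasurable.restrict) ?_
  refine (ae_restrict_iff' measurableSet_Ioi).2 (ae_of_all _ fun t ht => ?_)
  have ht1 : (1:ℝ) ≤ t := le_of_lt ht
  have ht0 : (0:ℝ) < t := lt_of_lt_of_le one_pos ht1
  have hFt : ‖p.F t‖ = ‖p.θ t‖ * t ^ b := by
    rw [p.F_of_pos ht0, norm_mul,
      Complex.norm_cpow_eq_rpow_re_of_pos ht0]
  have h2 : ‖p.F t‖ ≤ C * (t ^ (max b 0) * Real.exp (-a * t)) := by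
    rw [hFt]
    have h3 : t ^ b ≤ t ^ (max b 0) :=
      Real.rpow_le_rpow_of_exponent_le ht1 (le_max_left b 0)
    calc ‖p.θ t‖ * t ^ b ≤ (C * Real.exp (-a * t)) * t ^ (max b 0) :=
          mul_le_mul (hb t ht1) h3 (Real.rpow_nonneg ht0.le _)
            (by positivity)
      _ = C * (t ^ (max b 0) * Real.exp (-a * t)) := by ring
  refine h2.trans (le_abs_self _)

lemma GP.integrable_F (p : GP) : Integrable p.F := by
  have h1 : IntegrableOn p.F (Set.Ioc 0 1) := by
    obtain ⟨K, hK⟩ := p.exists_bound_small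
    refine Measure.integrableOn_of_bounded (M := K) ?_
      p.stronglyMeasurable_F.aestronglyMeasurable ?_
    · simp
    · exact (ae_restrict_iff' measurableSet_Ioc).2 (ae_of_all _ hK)
  have h2 : IntegrableOn p.F (Set.Ioi 0) := by
    have := h1.union p.integrableOn_F_Ioi1
    rwa [Set.Ioc_union_Ioi_eq_Ioi zero_le_one] at this
  have h3 : IntegrableOn p.F (Set.Iic 0) := by
    refine (integrable_zero _ _ _).integrableOn.congr_fun (fun t ht => ?_) measurableSet_Iic
    simp only [Pi.zero_apply, GP.F]
    exact (Set.indicator_of_notMem (by simpa using ht) _).symm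
  have := h3.union h2
  rwa [Set.Iic_union_Ioi, integrableOn_univ] at this

end IterMellinFE
namespace IterMellinFE

noncomputable def J : List GP → ℝ → ℝ → ℂ
  | [], _, _ => 1
  | p :: L, a, T => ∫ t in Set.Ioc a T, p.F t * J L a t

noncomputable def Jinf : List GP → ℝ → ℂ
  | [], _ => 1
  | p :: L, a => ∫ t in Set.Ioi a, p.F t * J L a t

/-- product of the `∫ ‖F‖` bounds -/
noncomputable def BL : List GP → ℝ
  | [] => 1
  | p :: L => (∫ t, ‖p.F t‖) * BL L

lemma BL_nonneg : ∀ L : List GP, 0 ≤ BL L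
  | [] => zero_le_one
  | p :: L => mul_nonneg (integral_nonneg fun t => norm_nonneg _) (BL_nonneg L)

lemma stronglyMeasurable_J (L : List GP) :
    StronglyMeasurable (fun q : ℝ × ℝ => J L q.1 q.2) := by
  induction L with
  | nil => exact stronglyMeasurable_const
  | cons p M ih =>
    have hfun : (fun q : ℝ × ℝ => J (p :: M) q.1 q.2) =
        fun q : ℝ × ℝ => ∫ t, ({z : (ℝ × ℝ) × ℝ | z.1.1 < z.2 ∧ z.2 ≤ z.1.2}.indicator
          (fun z => p.F z.2 * J M z.1.1 z.2)) (q, t) := by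
      funext q
      show J (p :: M) q.1 q.2 = _
      rw [show J (p :: M) q.1 q.2 = ∫ t in Set.Ioc q.1 q.2, p.F t * J M q.1 t from rfl,
        ← integral_indicator measurableSet_Ioc]
      congr 1
    rw [hfun]
    apply StronglyMeasurable.integral_prod_right'
    apply StronglyMeasurable.indicator
    · exact (p.stronglyMeasurable_F.comp_measurable measurable_snd).mul
        (ih.comp_measurable ((measurable_fst.fst).prodMk measurable_snd))
    · exact MeasurableSet.inter
        (measurableSet_lt (measurable_fst.fst) measurable_snd)
        (measurableSet_le measurable_snd (measurable_fst.snd))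

lemma stronglyMeasurable_J_left (L : List GP) (a : ℝ) :
    StronglyMeasurable (fun t : ℝ => J L a t) :=
  (stronglyMeasurable_J L).comp_measurable (measurable_const.prodMk measurable_id)

lemma stronglyMeasurable_J_right (L : List GP) (T : ℝ) :
    StronglyMeasurable (fun u : ℝ => J L u T) :=
  (stronglyMeasurable_J L).comp_measurable (measurable_id.prodMk measurable_const)

lemma norm_J_le : ∀ (L : List GP) (a T : ℝ), ‖J L a T‖ ≤ BL L := by
  intro L
  induction L with
  | nil => intro a T; simp [J, BL]
  | cons p M ih =>
    intro a T
    have h1 : ∀ t : ℝ, ‖p.F t * J M a t‖ ≤ ‖p.F t‖ * BL M := by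
      intro t
      rw [norm_mul]
      exact mul_le_mul_of_nonneg_left (ih a t) (norm_nonneg _)
    calc ‖J (p :: M) a T‖ ≤ ∫ t in Set.Ioc a T, ‖p.F t * J M a t‖ :=
          norm_integral_le_integral_norm _
      _ ≤ ∫ t in Set.Ioc a T, ‖p.F t‖ * BL M := by
          refine integral_mono_of_nonneg (ae_of_all _ fun t => norm_nonneg _)
            ((p.integrable_F.norm.mul_const (BL M)).restrict) (ae_of_all _ h1)
      _ = (∫ t in Set.Ioc a T, ‖p.F t‖) * BL M := by rw [integral_mul_const]
      _ ≤ (∫ t, ‖p.F t‖) * BL M := by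
          refine mul_le_mul_of_nonneg_right ?_ (BL_nonneg M)
          exact setIntegral_le_integral p.integrable_F.norm
            (ae_of_all _ fun t => norm_nonneg _)
      _ = BL (p :: M) := rfl

lemma integrable_mul_J (p : GP) (L : List GP) (a : ℝ) :
    Integrable (fun t => p.F t * J L a t) := by
  refine Integrable.mono (p.integrable_F.norm.mul_const (BL L))
    ((p.stronglyMeasurable_F.mul (stronglyMeasurable_J_left L a)).aestronglyMeasurable) ?_
  refine ae_of_all _ fun t => ?_
  rw [norm_mul]
  calc ‖p.F t‖ * ‖J L a t‖ ≤ ‖p.F t‖ * BL L :=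
        mul_le_mul_of_nonneg_left (norm_J_le L a t) (norm_nonneg _)
    _ ≤ ‖‖p.F t‖ * BL L‖ := le_abs_self _

end IterMellinFE
namespace IterMellinFE

lemma B_nonneg_of_bound {K : ℝ → ℝ → ℂ} {B : ℝ} (hB : ∀ u t, ‖K u t‖ ≤ B) : 0 ≤ B :=
  le_trans (norm_nonneg _) (hB 0 0)

section swap

variable {f g : ℝ → ℂ} {K : ℝ → ℝ → ℂ} {B : ℝ}
  (hf : Integrable f) (hfm : StronglyMeasurable f)
  (hg : Integrable g) (hgm : StronglyMeasurable g)
  (hK : StronglyMeasurable fun z : ℝ × ℝ => K z.1 z.2)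
  (hB : ∀ u t, ‖K u t‖ ≤ B)

include hf hfm hg hgm hK hB

lemma swap_core {R : Set (ℝ × ℝ)} (hRm : MeasurableSet R) :
    Integrable (Function.uncurry fun t u =>
      R.indicator (fun z : ℝ × ℝ => f z.1 * g z.2 * K z.2 z.1) (t, u))
      (volume.prod volume) := by
  have hB0 : 0 ≤ B := B_nonneg_of_bound hB
  have hmaj : Integrable (fun z : ℝ × ℝ => (‖f z.1‖ * B) * ‖g z.2‖)
      (volume.prod volume) := (hf.norm.mul_const B).mul_prod hg.norm
  refine Integrable.mono hmaj ?_ (ae_of_all _ fun z => ?_)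
  · refine (StronglyMeasurable.indicator ?_ hRm).aestronglyMeasurable
    exact ((hfm.comp_measurable measurable_fst).mul
      (hgm.comp_measurable measurable_snd)).mul
      (hK.comp_measurable (measurable_snd.prodMk measurable_fst))
  · rw [show Function.uncurry (fun t u =>
        R.indicator (fun z : ℝ × ℝ => f z.1 * g z.2 * K z.2 z.1) (t, u)) z
        = R.indicator (fun z : ℝ × ℝ => f z.1 * g z.2 * K z.2 z.1) (z.1, z.2) from rfl]
    by_cases h : (z.1, z.2) ∈ R
    · rw [Set.indicator_of_mem h]
      calc ‖f z.1 * g z.2 * K z.2 z.1‖ = ‖f z.1‖ * ‖g z.2‖ * ‖K z.2 z.1‖ := by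
            rw [norm_mul, norm_mul]
        _ ≤ ‖f z.1‖ * ‖g z.2‖ * B :=
            mul_le_mul_of_nonneg_left (hB _ _) (by positivity)
        _ = (‖f z.1‖ * B) * ‖g z.2‖ := by ring
        _ ≤ ‖(‖f z.1‖ * B) * ‖g z.2‖‖ := le_abs_self _
    · rw [Set.indicator_of_notMem h]
      simp only [norm_zero]
      positivity

lemma swap_Ioc (a T : ℝ) :
    ∫ t in Set.Ioc a T, f t * ∫ u in Set.Ioc a t, g u * K u t =
      ∫ u in Set.Ioc a T, g u * ∫ t in Set.Ioc u T, f t * K u t := by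
  set R : Set (ℝ × ℝ) := {z | a < z.2 ∧ z.2 ≤ z.1 ∧ z.1 ≤ T} with hR
  have hRm : MeasurableSet R :=
    (measurableSet_lt measurable_const measurable_snd).inter
      ((measurableSet_le measurable_snd measurable_fst).inter
        (measurableSet_le measurable_fst measurable_const))
  set Φ : ℝ → ℝ → ℂ := fun t u =>
    R.indicator (fun z : ℝ × ℝ => f z.1 * g z.2 * K z.2 z.1) (t, u) with hΦ
  have hint := swap_core hf hfm hg hgm hK hB hRm
  have main := integral_integral_swap (f := Φ) (μ := volume) (ν := volume) hint
  have hL : (∫ t, ∫ u, Φ t u) =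
      ∫ t in Set.Ioc a T, f t * ∫ u in Set.Ioc a t, g u * K u t := by
    rw [← integral_indicator (measurableSet_Ioc (a := a) (b := T))]
    congr 1
    funext t
    by_cases h : t ∈ Set.Ioc a T
    · rw [Set.indicator_of_mem h]
      have h2 : ∀ u, Φ t u = (Set.Ioc a t).indicator (fun u => f t * (g u * K u t)) u := by
        intro u
        simp only [hΦ, hR, Set.indicator_apply, Set.mem_setOf_eq, Set.mem_Ioc]
        rcases h with ⟨h1, h2⟩
        by_cases hu : a < u ∧ u ≤ t
        · rw [if_pos ⟨hu.1, hu.2, h2⟩, if_pos hu]; ring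
        · rw [if_neg (fun hc => hu ⟨hc.1, hc.2.1⟩), if_neg hu]
      simp only [h2]
      rw [integral_indicator measurableSet_Ioc, integral_const_mul]
    · rw [Set.indicator_of_notMem h]
      have h2 : ∀ u, Φ t u = 0 := by
        intro u
        refine Set.indicator_of_notMem (fun hc => h ?_) _
        exact ⟨lt_of_lt_of_le hc.1 hc.2.1, hc.2.2⟩
      simp [h2]
  have hRt : (∫ u, ∫ t, Φ t u) =
      ∫ u in Set.Ioc a T, g u * ∫ t in Set.Ioc u T, f t * K u t := by
    rw [← integral_indicator (measurableSet_Ioc (a := a) (b := T))]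
    congr 1
    funext u
    by_cases h : u ∈ Set.Ioc a T
    · rw [Set.indicator_of_mem h]
      have h2 : ∀ t, Φ t u = (Set.Icc u T).indicator (fun t => g u * (f t * K u t)) t := by
        intro t
        simp only [hΦ, hR, Set.indicator_apply, Set.mem_setOf_eq, Set.mem_Icc]
        rcases h with ⟨h1, _⟩
        by_cases htc : u ≤ t ∧ t ≤ T
        · rw [if_pos ⟨h1, htc.1, htc.2⟩, if_pos htc]; ring
        · rw [if_neg (fun hc => htc ⟨hc.2.1, hc.2.2⟩), if_neg htc]
      simp only [h2]
      rw [integral_indicator measurableSet_Icc, integral_Icc_eq_integral_Ioc,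
        integral_const_mul]
    · rw [Set.indicator_of_notMem h]
      have h2 : ∀ t, Φ t u = 0 := by
        intro t
        refine Set.indicator_of_notMem (fun hc => h ?_) _
        exact ⟨hc.1, le_trans hc.2.1 hc.2.2⟩
      simp [h2]
  rw [← hL, ← hRt]
  exact main

lemma swap_Ioi (a : ℝ) :
    ∫ t in Set.Ioi a, f t * ∫ u in Set.Ioc a t, g u * K u t =
      ∫ u in Set.Ioi a, g u * ∫ t in Set.Ioi u, f t * K u t := by
  set R : Set (ℝ × ℝ) := {z | a < z.2 ∧ z.2 ≤ z.1} with hR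
  have hRm : MeasurableSet R :=
    (measurableSet_lt measurable_const measurable_snd).inter
      (measurableSet_le measurable_snd measurable_fst)
  set Φ : ℝ → ℝ → ℂ := fun t u =>
    R.indicator (fun z : ℝ × ℝ => f z.1 * g z.2 * K z.2 z.1) (t, u) with hΦ
  have hint := swap_core hf hfm hg hgm hK hB hRm
  have main := integral_integral_swap (f := Φ) (μ := volume) (ν := volume) hint
  have hL : (∫ t, ∫ u, Φ t u) =
      ∫ t in Set.Ioi a, f t * ∫ u in Set.Ioc a t, g u * K u t := by
    rw [← integral_indicator (measurableSet_Ioi (a := a))]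
    congr 1
    funext t
    by_cases h : t ∈ Set.Ioi a
    · rw [Set.indicator_of_mem h]
      have h2 : ∀ u, Φ t u = (Set.Ioc a t).indicator (fun u => f t * (g u * K u t)) u := by
        intro u
        simp only [hΦ, hR, Set.indicator_apply, Set.mem_setOf_eq, Set.mem_Ioc]
        by_cases hu : a < u ∧ u ≤ t
        · rw [if_pos hu, if_pos hu]; ring
        · rw [if_neg hu, if_neg hu]
      simp only [h2]
      rw [integral_indicator measurableSet_Ioc, integral_const_mul]
    · rw [Set.indicator_of_notMem h]
      have h2 : ∀ u, Φ t u = 0 := by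
        intro u
        refine Set.indicator_of_notMem (fun hc => h ?_) _
        exact lt_of_lt_of_le hc.1 hc.2
      have h3 : Set.Ioc a t = ∅ := by
        rw [Set.Ioc_eq_empty]
        intro hc
        exact h (Set.mem_Ioi.2 hc)
      simp [h2, h3]
  have hRt : (∫ u, ∫ t, Φ t u) =
      ∫ u in Set.Ioi a, g u * ∫ t in Set.Ioi u, f t * K u t := by
    rw [← integral_indicator (measurableSet_Ioi (a := a))]
    congr 1
    funext u
    by_cases h : u ∈ Set.Ioi a
    · rw [Set.indicator_of_mem h]
      have h2 : ∀ t, Φ t u = (Set.Ici u).indicator (fun t => g u * (f t * K u t)) t := by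
        intro t
        simp only [hΦ, hR, Set.indicator_apply, Set.mem_setOf_eq, Set.mem_Ici]
        by_cases htc : u ≤ t
        · rw [if_pos ⟨h, htc⟩, if_pos htc]; ring
        · rw [if_neg (fun hc => htc hc.2), if_neg htc]
      simp only [h2]
      rw [integral_indicator measurableSet_Ici, integral_Ici_eq_integral_Ioi,
        integral_const_mul]
    · rw [Set.indicator_of_notMem h]
      have h2 : ∀ t, Φ t u = 0 := by
        intro t
        exact Set.indicator_of_notMem (fun hc => h hc.1) _
      simp [h2]
  rw [← hL, ← hRt]
  exact main

end swap

end IterMellinFE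
namespace IterMellinFE

lemma J_append (q : GP) : ∀ (L : List GP) (a T : ℝ),
    J (L ++ [q]) a T = ∫ u in Set.Ioc a T, q.F u * J L u T := by
  intro L
  induction L with
  | nil =>
    intro a T
    simp only [List.nil_append]
    show (∫ t in Set.Ioc a T, q.F t * J [] a t) = _
    simp [J]
  | cons p M ih =>
    intro a T
    show (∫ t in Set.Ioc a T, p.F t * J (M ++ [q]) a t) = _
    have h1 : ∀ t : ℝ, p.F t * J (M ++ [q]) a t =
        p.F t * ∫ u in Set.Ioc a t, q.F u * J M u t := by
      intro t; rw [ih a t]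
    simp only [h1]
    rw [swap_Ioc p.integrable_F p.stronglyMeasurable_F q.integrable_F
      q.stronglyMeasurable_F (stronglyMeasurable_J M) (norm_J_le M · ·) a T]
    rfl

lemma Jinf_append (q : GP) : ∀ (L : List GP) (a : ℝ),
    Jinf (L ++ [q]) a = ∫ u in Set.Ioi a, q.F u * Jinf L u := by
  intro L
  cases L with
  | nil =>
    intro a
    simp only [List.nil_append]
    show (∫ t in Set.Ioi a, q.F t * J [] a t) = _
    simp [J, Jinf]
  | cons p M =>
    intro a
    show (∫ t in Set.Ioi a, p.F t * J (M ++ [q]) a t) = _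
    have h1 : ∀ t : ℝ, p.F t * J (M ++ [q]) a t =
        p.F t * ∫ u in Set.Ioc a t, q.F u * J M u t := by
      intro t; rw [J_append q M a t]
    simp only [h1]
    rw [swap_Ioi p.integrable_F p.stronglyMeasurable_F q.integrable_F
      q.stronglyMeasurable_F (stronglyMeasurable_J M) (norm_J_le M · ·) a]
    rfl

end IterMellinFE
namespace IterMellinFE

lemma image_inv_Ioi_zero : (fun x : ℝ => x⁻¹) '' Set.Ioi 0 = Set.Ioi 0 := by
  ext x
  simp only [Set.mem_image, Set.mem_Ioi]
  constructor
  · rintro ⟨y, hy, rfl⟩; exact inv_pos.2 hy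
  · intro hx; exact ⟨x⁻¹, inv_pos.2 hx, inv_inv x⟩

lemma image_inv_Ioi {T : ℝ} (hT : 0 < T) :
    (fun x : ℝ => x⁻¹) '' Set.Ioi T⁻¹ = Set.Ioo 0 T := by
  ext x
  simp only [Set.mem_image, Set.mem_Ioi, Set.mem_Ioo]
  constructor
  · rintro ⟨y, hy, rfl⟩
    have hy0 : 0 < y := lt_trans (inv_pos.2 hT) hy
    refine ⟨inv_pos.2 hy0, ?_⟩
    rw [← inv_inv T]
    exact inv_strictAnti₀ (inv_pos.2 hT) hy
  · rintro ⟨hx0, hxT⟩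
    refine ⟨x⁻¹, ?_, inv_inv x⟩
    exact inv_strictAnti₀ hx0 hxT

lemma integral_inv_Ioi_zero (g : ℝ → ℂ) :
    ∫ x in Set.Ioi (0:ℝ), g x = ∫ u in Set.Ioi (0:ℝ), (u ^ 2)⁻¹ • g u⁻¹ := by
  have h := integral_image_eq_integral_abs_deriv_smul (f := fun x : ℝ => x⁻¹)
    (f' := fun x : ℝ => -(x ^ 2)⁻¹) measurableSet_Ioi
    (fun x hx => (hasDerivAt_inv (ne_of_gt (Set.mem_Ioi.1 hx))).hasDerivWithinAt)
    (fun x _ y _ hxy => inv_injective hxy) g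
  rw [image_inv_Ioi_zero] at h
  rw [h]
  refine setIntegral_congr_fun measurableSet_Ioi (fun x _ => ?_)
  rw [abs_neg, _root_.abs_of_nonneg (inv_nonneg.2 (sq_nonneg x))]

lemma integral_inv_Ioc (g : ℝ → ℂ) {T : ℝ} (hT : 0 < T) :
    ∫ x in Set.Ioc (0:ℝ) T, g x = ∫ u in Set.Ioi T⁻¹, (u ^ 2)⁻¹ • g u⁻¹ := by
  have h := integral_image_eq_integral_abs_deriv_smul (f := fun x : ℝ => x⁻¹)
    (f' := fun x : ℝ => -(x ^ 2)⁻¹) measurableSet_Ioi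
    (fun x hx => (hasDerivAt_inv
      (ne_of_gt (lt_trans (inv_pos.2 hT) (Set.mem_Ioi.1 hx)))).hasDerivWithinAt)
    (fun x _ y _ hxy => inv_injective hxy) g
  rw [image_inv_Ioi hT] at h
  rw [← integral_Ioc_eq_integral_Ioo] at h
  rw [h]
  refine setIntegral_congr_fun measurableSet_Ioi (fun x _ => ?_)
  rw [abs_neg, _root_.abs_of_nonneg (inv_nonneg.2 (sq_nonneg x))]

end IterMellinFE
namespace IterMellinFE

lemma GP.key (p : GP) {u : ℝ} (hu : 0 < u) :
    ((u ^ 2)⁻¹ : ℝ) • p.F u⁻¹ = p.ε * p.dual.F u := by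
  have hui : 0 < u⁻¹ := inv_pos.2 hu
  have hx : ((u : ℂ)) ≠ 0 := Complex.ofReal_ne_zero.2 (ne_of_gt hu)
  rw [p.F_of_pos hui, show p.dual.F u = p.θ u * (u : ℂ) ^ (((p.w : ℂ) - p.s) - 1) from
    p.dual.F_of_pos hu]
  have hθ : p.θ u⁻¹ = p.ε * (u : ℂ) ^ ((p.w : ℤ) : ℂ) * p.θ u := by
    have e := p.hinv u hu
    rwa [one_div] at e
  have harg : (u : ℂ).arg ≠ Real.pi := by
    rw [Complex.arg_ofReal_of_nonneg hu.le]
    exact (ne_of_gt Real.pi_pos).symm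
  have hc1 : ((u⁻¹ : ℝ) : ℂ) ^ (p.s - 1) = ((u : ℂ) ^ (p.s - 1))⁻¹ := by
    rw [Complex.ofReal_inv, Complex.inv_cpow _ _ harg]
  have hsmul : (((u ^ 2)⁻¹ : ℝ) : ℂ) = ((u : ℂ) ^ (2:ℕ))⁻¹ := by push_cast; ring
  rw [Complex.real_smul, hsmul, hθ, hc1]
  have hexp : (u : ℂ) ^ (((p.w : ℂ) - p.s) - 1) =
      (u : ℂ) ^ ((p.w : ℂ)) * ((u : ℂ) ^ (p.s - 1))⁻¹ * ((u : ℂ) ^ (2:ℕ))⁻¹ := by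
    rw [← Complex.cpow_neg, ← Complex.cpow_natCast, ← Complex.cpow_neg,
      ← Complex.cpow_add _ _ hx, ← Complex.cpow_add _ _ hx]
    congr 1
    push_cast
    ring
  rw [hexp]
  ring

noncomputable def epsL (L : List GP) : ℂ := (L.map GP.ε).prod

noncomputable def dualL (L : List GP) : List GP := L.map GP.dual

lemma inv_main : ∀ (L : List GP) {T : ℝ}, 0 < T →
    J L 0 T = epsL L * Jinf ((dualL L).reverse) T⁻¹ := by
  intro L
  induction L with
  | nil => intro T hT; simp [J, Jinf, epsL, dualL]
  | cons p M ih =>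
    intro T hT
    have hTi : 0 < T⁻¹ := inv_pos.2 hT
    show (∫ t in Set.Ioc 0 T, p.F t * J M 0 t) = _
    rw [integral_inv_Ioc _ hT]
    have h1 : ∀ u ∈ Set.Ioi T⁻¹, (u ^ 2)⁻¹ • (p.F u⁻¹ * J M 0 u⁻¹) =
        (p.ε * epsL M) * (p.dual.F u * Jinf ((dualL M).reverse) u) := by
      intro u hu
      have hu0 : 0 < u := lt_trans hTi (Set.mem_Ioi.1 hu)
      have hiu : J M 0 u⁻¹ = epsL M * Jinf ((dualL M).reverse) u := by
        rw [ih (inv_pos.2 hu0), inv_inv]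
      rw [hiu, ← smul_mul_assoc, p.key hu0]
      ring
    rw [setIntegral_congr_fun measurableSet_Ioi h1]
    rw [integral_const_mul]
    have h2 : (∫ u in Set.Ioi T⁻¹, p.dual.F u * Jinf ((dualL M).reverse) u) =
        Jinf ((dualL (p :: M)).reverse) T⁻¹ := by
      rw [show (dualL (p :: M)).reverse = (dualL M).reverse ++ [p.dual] by
        simp [dualL]]
      rw [Jinf_append]
    rw [h2]
    show (p.ε * epsL M) * _ = epsL (p :: M) * _
    rw [show epsL (p :: M) = p.ε * epsL M from rfl]

lemma inv_main_top : ∀ L : List GP, Jinf L 0 = epsL L * Jinf ((dualL L).reverse) 0 := by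
  intro L
  cases L with
  | nil => simp [Jinf, epsL, dualL]
  | cons p M =>
    show (∫ t in Set.Ioi 0, p.F t * J M 0 t) = _
    rw [integral_inv_Ioi_zero]
    have h1 : ∀ u ∈ Set.Ioi (0:ℝ), (u ^ 2)⁻¹ • (p.F u⁻¹ * J M 0 u⁻¹) =
        (p.ε * epsL M) * (p.dual.F u * Jinf ((dualL M).reverse) u) := by
      intro u hu
      have hu0 : 0 < u := Set.mem_Ioi.1 hu
      have hiu : J M 0 u⁻¹ = epsL M * Jinf ((dualL M).reverse) u := by
        rw [inv_main M (inv_pos.2 hu0), inv_inv]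
      rw [hiu, ← smul_mul_assoc, p.key hu0]
      ring
    rw [setIntegral_congr_fun measurableSet_Ioi h1, integral_const_mul]
    have h2 : (∫ u in Set.Ioi (0:ℝ), p.dual.F u * Jinf ((dualL M).reverse) u) =
        Jinf ((dualL (p :: M)).reverse) 0 := by
      rw [show (dualL (p :: M)).reverse = (dualL M).reverse ++ [p.dual] by
        simp [dualL]]
      rw [Jinf_append]
    rw [h2]
    rfl

end IterMellinFE

namespace IterMellinFE

def GP.toPair (p : GP) : (ℝ → ℂ) × ℂ := (p.θ, p.s)

lemma upTo_eq : ∀ (L : List GP) (T : ℝ),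
    iterMellinUpTo (L.map GP.toPair) T = J L 0 T := by
  intro L
  induction L with
  | nil => intro T; rfl
  | cons p M ih =>
    intro T
    show (∫ t in Set.Ioc (0:ℝ) T,
        p.θ t * (t : ℂ) ^ (p.s - 1) * iterMellinUpTo (M.map GP.toPair) t) = _
    show _ = ∫ t in Set.Ioc (0:ℝ) T, p.F t * J M 0 t
    refine setIntegral_congr_fun measurableSet_Ioc (fun t ht => ?_)
    rw [ih t, p.F_of_pos ht.1]

lemma mellin_eq : ∀ L : List GP, iterMellin (L.map GP.toPair) = Jinf L 0 := by
  intro L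
  cases L with
  | nil => rfl
  | cons p M =>
    show (∫ t in Set.Ioi (0:ℝ),
        p.θ t * (t : ℂ) ^ (p.s - 1) * iterMellinUpTo (M.map GP.toPair) t) = _
    show _ = ∫ t in Set.Ioi (0:ℝ), p.F t * J M 0 t
    refine setIntegral_congr_fun measurableSet_Ioi (fun t ht => ?_)
    rw [upTo_eq M t, p.F_of_pos (Set.mem_Ioi.1 ht)]

end IterMellinFE

open IterMellinFE in
/-- Functional equation for iterated Mellin transforms:
`Λ(θ₁,…,θ_r; s₁,…,s_r) = ε₁⋯ε_r Λ(θ_r,…,θ₁; w_r - s_r, …, w₁ - s₁)`. -/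
theorem iterMellin_functional_equation (r : ℕ)
    (θ : Fin r → ℝ → ℂ) (ε : Fin r → ℂ) (w : Fin r → ℤ) (s : Fin r → ℂ)
    (hc : ∀ i, ContinuousOn (θ i) (Set.Ioi 0))
    (hε : ∀ i, ε i = 1 ∨ ε i = -1)
    (hinv : ∀ i, ∀ t : ℝ, 0 < t → θ i (1 / t) = ε i * (t : ℂ) ^ ((w i : ℤ) : ℂ) * θ i t)
    (hdecay : ∀ i, ∃ C a : ℝ, 0 < C ∧ 0 < a ∧
      ∀ t : ℝ, 1 ≤ t → ‖θ i t‖ ≤ C * Real.exp (-a * t)) :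
    iterMellin ((List.ofFn fun i => (θ i, s i)).reverse) =
      (∏ i, ε i) *
        iterMellin (List.ofFn fun i => (θ i, ((w i : ℤ) : ℂ) - s i)) := by
  set gp : Fin r → GP := fun i => ⟨θ i, s i, ε i, w i, hc i, hε i, hinv i, hdecay i⟩ with hgp
  have hL1 : (List.ofFn fun i => (θ i, s i)) = (List.ofFn gp).map GP.toPair := by
    rw [List.map_ofFn]; rfl
  have hL2 : (List.ofFn fun i => (θ i, ((w i : ℤ) : ℂ) - s i)) =
      (List.ofFn (GP.dual ∘ gp)).map GP.toPair := by
    rw [List.map_ofFn]; rfl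
  rw [hL1, hL2, ← List.map_reverse, mellin_eq, inv_main_top, mellin_eq]
  congr 1
  · show epsL ((List.ofFn gp).reverse) = ∏ i, ε i
    rw [epsL, List.map_reverse, List.prod_reverse, List.map_ofFn, List.prod_ofFn]
    rfl
  · congr 1
    show ((dualL ((List.ofFn gp).reverse)).reverse) = List.ofFn (GP.dual ∘ gp)
    rw [dualL, List.map_reverse, List.reverse_reverse, List.map_ofFn]
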